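/- Let X be a Banach ideal space on a σ-finite measure space and J an order ideal of X (a closed solid linear subspace). Then for every f ∈ X, dist(f, J) = inf{ ‖f - g‖_X : g ∈ J, |g| ≤ |f| }. -/

import Mathlib

open Filter Topology MeasureTheory Set

/-- A **Banach ideal space** on a measure space `(α, μ)`: a collection of (real-valued)
measurable functions with a complete lattice-compatible norm satisfying the ideal property. -/
structure BanachIdealSpace (α : Type*) [MeasurableSpace α] (μ : Measure α) where
  Mem : (α → ℝ) → Prop
  N : (α → ℝ) → ℝ
  mem_zero : Mem 0
  mem_add : ∀ f g, Mem f → Mem g → Mem (f + g)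
  mem_smul : ∀ (c : ℝ) f, Mem f → Mem (c • f)
  measurable : ∀ f, Mem f → AEMeasurable f μ
  N_nonneg : ∀ f, 0 ≤ N f
  N_zero : N 0 = 0
  N_eq_zero : ∀ f, Mem f → N f = 0 → (∀ᵐ x ∂μ, f x = 0)
  N_add : ∀ f g, Mem f → Mem g → N (f + g) ≤ N f + N g
  N_smul : ∀ (c : ℝ) f, N (c • f) = |c| * N f
  ideal : ∀ f g, AEMeasurable f μ → (∀ᵐ x ∂μ, |f x| ≤ |g x|) → Mem g →
    Mem f ∧ N f ≤ N g
  complete : ∀ u : ℕ → (α → ℝ), (∀ n, Mem (u n)) →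
    (∀ ε : ℝ, 0 < ε → ∃ n₀ : ℕ, ∀ m n, n₀ ≤ m → n₀ ≤ n → N (u m - u n) < ε) →
    ∃ f, Mem f ∧ Tendsto (fun n => N (u n - f)) atTop (𝓝 0)

namespace BanachIdealSpace

variable {α : Type*} [MeasurableSpace α] {μ : Measure α}

/-- Distance (w.r.t. a norm functional `N`) from `f` to a set `S` of functions. -/
noncomputable def distIn (N : (α → ℝ) → ℝ) (f : α → ℝ) (S : Set (α → ℝ)) : ℝ :=
  sInf ((fun g => N (f - g)) '' S)

/-- The set of **order continuous elements** of a (generalized) function space given by a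
membership predicate `Mem` and a norm `N`: those `f` such that every sequence `uₙ` with
`0 ≤ uₙ ≤ |f|` a.e., a.e. non-increasing and converging to `0` a.e., satisfies `N (uₙ) → 0`. -/
def ocSet (μ : Measure α) (Mem : (α → ℝ) → Prop) (N : (α → ℝ) → ℝ) : Set (α → ℝ) :=
  {f | Mem f ∧ ∀ u : ℕ → (α → ℝ), (∀ n, Mem (u n)) →
    (∀ n, ∀ᵐ x ∂μ, 0 ≤ u n x ∧ u n x ≤ |f x|) →
    (∀ n, ∀ᵐ x ∂μ, u (n + 1) x ≤ u n x) →
    (∀ᵐ x ∂μ, Tendsto (fun n => u n x) atTop (𝓝 0)) →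
    Tendsto (fun n => N (u n)) atTop (𝓝 0)}

/-- The ideal `X_a` of order continuous elements of a Banach ideal space `X`. -/
def oc (X : BanachIdealSpace α μ) : Set (α → ℝ) := ocSet μ X.Mem X.N

/-- An **order ideal** of a Banach ideal space: a closed solid linear subspace. -/
structure IsOrderIdeal (X : BanachIdealSpace α μ) (J : Set (α → ℝ)) : Prop where
  subset : ∀ f ∈ J, X.Mem f
  zero : (0 : α → ℝ) ∈ J
  add : ∀ f g, f ∈ J → g ∈ J → f + g ∈ J
  smul : ∀ (c : ℝ) f, f ∈ J → c • f ∈ J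
  solid : ∀ f g, f ∈ J → X.Mem g → (∀ᵐ x ∂μ, |g x| ≤ |f x|) → g ∈ J
  closed : ∀ (u : ℕ → (α → ℝ)) f, (∀ n, u n ∈ J) → X.Mem f →
    Tendsto (fun n => X.N (f - u n)) atTop (𝓝 0) → f ∈ J

/-- The **Fatou property** of a Banach ideal space. -/
def Fatou (X : BanachIdealSpace α μ) : Prop :=
  ∀ (u : ℕ → (α → ℝ)) (f : α → ℝ), (∀ n, X.Mem (u n)) → AEMeasurable f μ →
    (∀ᵐ x ∂μ, 0 ≤ u 0 x) → (∀ᵐ x ∂μ, Monotone fun n => u n x) →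
    (∀ᵐ x ∂μ, Tendsto (fun n => u n x) atTop (𝓝 (f x))) →
    BddAbove (Set.range fun n => X.N (u n)) →
    X.Mem f ∧ Tendsto (fun n => X.N (u n)) atTop (𝓝 (X.N f))

/-- The **semi-Fatou property**: if `0 ≤ uₙ ↑ f ∈ X` then `‖uₙ‖ ↑ ‖f‖`. -/
def SemiFatou (X : BanachIdealSpace α μ) : Prop :=
  ∀ (u : ℕ → (α → ℝ)) (f : α → ℝ), (∀ n, X.Mem (u n)) → X.Mem f →
    (∀ᵐ x ∂μ, 0 ≤ u 0 x) → (∀ᵐ x ∂μ, Monotone fun n => u n x) →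
    (∀ᵐ x ∂μ, Tendsto (fun n => u n x) atTop (𝓝 (f x))) →
    Tendsto (fun n => X.N (u n)) atTop (𝓝 (X.N f))

/-- A Banach ideal space is **rearrangement invariant (symmetric)**: equimeasurable
functions belong to the space simultaneously and have equal norms. -/
def Symmetric (X : BanachIdealSpace α μ) : Prop :=
  ∀ f g, AEMeasurable f μ →
    (∀ lam : ℝ, 0 < lam → μ {x | lam < |f x|} = μ {x | lam < |g x|}) →
    X.Mem g → X.Mem f ∧ X.N f = X.N g

/-- The **non-increasing rearrangement** of a function `f` (w.r.t. the measure `μ`). -/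
noncomputable def rear (μ : Measure α) (f : α → ℝ) (t : ℝ) : ℝ :=
  sInf {lam : ℝ | 0 < lam ∧ μ {x | lam < |f x|} ≤ ENNReal.ofReal t}

/-- A (generalized) function space given by `(Mem, N)` contains a **lattice isometric copy
of `ℓ∞`**: there is a linear map from bounded sequences which preserves absolute values
(hence the lattice operations) and is an isometry for the sup norm on bounded sequences. -/
def HasLatticeCopyLinf (Mem : (α → ℝ) → Prop) (N : (α → ℝ) → ℝ) : Prop :=
  ∃ T : (ℕ → ℝ) → (α → ℝ),
    (∀ x y, T (x + y) = T x + T y) ∧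
    (∀ (c : ℝ) x, T (c • x) = c • T x) ∧
    (∀ x, T (fun n => |x n|) = fun t => |T x t|) ∧
    (∀ x : ℕ → ℝ, BddAbove (Set.range fun n => |x n|) →
      Mem (T x) ∧ N (T x) = ⨆ n, |x n|)

end BanachIdealSpace

open BanachIdealSpace

/-- Let `X` be a Banach ideal space on a σ-finite measure space and `J` an order ideal of
`X`. Then for every `f ∈ X`,
`dist (f, J) = inf { ‖f - g‖_X : g ∈ J, |g| ≤ |f| a.e. }`. -/
theorem dist_to_order_ideal_eq_inf_dominated {α : Type*} [MeasurableSpace α]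
    {μ : Measure α} [SigmaFinite μ] (X : BanachIdealSpace α μ) (J : Set (α → ℝ))
    (hJ : X.IsOrderIdeal J) (f : α → ℝ) (hf : X.Mem f) :
    distIn X.N f J =
      sInf ((fun g => X.N (f - g)) '' {g ∈ J | ∀ᵐ x ∂μ, |g x| ≤ |f x|}) := by

  have hfm : AEMeasurable f μ := X.measurable f hf
  set S1 : Set ℝ := (fun g => X.N (f - g)) '' J with hS1
  set S2 : Set ℝ := (fun g => X.N (f - g)) '' {g ∈ J | ∀ᵐ x ∂μ, |g x| ≤ |f x|} with hS2
  have h0mem : (0 : α → ℝ) ∈ {g ∈ J | ∀ᵐ x ∂μ, |g x| ≤ |f x|} := by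
    refine ⟨hJ.zero, Filter.Eventually.of_forall fun x => ?_⟩
    simp [abs_nonneg]
  have hS2ne : S2.Nonempty := ⟨X.N (f - 0), ⟨0, h0mem, rfl⟩⟩
  have hS1ne : S1.Nonempty := ⟨X.N (f - 0), ⟨0, hJ.zero, rfl⟩⟩
  have hbdd1 : BddBelow S1 := ⟨0, by rintro b ⟨g, -, rfl⟩; exact X.N_nonneg _⟩
  have hbdd2 : BddBelow S2 := ⟨0, by rintro b ⟨g, -, rfl⟩; exact X.N_nonneg _⟩
  have hsub : S2 ⊆ S1 := Set.image_mono fun g hg => hg.1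
  refine le_antisymm (csInf_le_csInf hbdd1 hS2ne hsub) ?_
  refine le_csInf hS1ne ?_
  rintro b ⟨g, hg, rfl⟩
  have hgmem : X.Mem g := hJ.subset g hg
  have hgm : AEMeasurable g μ := X.measurable g hgmem
  have habs : AEMeasurable (fun x => |f x|) μ :=
    continuous_abs.measurable.comp_aemeasurable hfm
  set h : α → ℝ := fun x => max (-(|f x|)) (min (g x) (|f x|)) with hh
  have hhm : AEMeasurable h μ := (habs.neg).max (hgm.min habs)
  have hhf : ∀ x, |h x| ≤ |f x| := by
    intro x
    rw [abs_le]
    constructor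
    · exact le_max_left _ _
    · exact max_le ((neg_abs_le (f x)).trans (le_abs_self _)) (min_le_right _ _)
  have hhg : ∀ x, |h x| ≤ |g x| := by
    intro x
    rcases le_total (g x) (-(|f x|)) with h1 | h1
    · have : h x = -(|f x|) := by
        have : min (g x) (|f x|) = g x := min_eq_left (h1.trans ((neg_abs_le (f x)).trans (le_abs_self _)))
        rw [hh]; simp only [this]; exact max_eq_left h1
      rw [this, abs_neg, abs_abs]
      calc |f x| ≤ -(g x) := by linarith
        _ ≤ |g x| := neg_le_abs _
    · rcases le_total (g x) (|f x|) with h2 | h2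
      · have : h x = g x := by
          rw [hh]; simp only [min_eq_left h2]; exact max_eq_right h1
        rw [this]
      · have : h x = |f x| := by
          rw [hh]; simp only [min_eq_right h2]
          exact max_eq_right ((neg_abs_le _).trans (le_abs_self _))
        rw [this, abs_abs]
        exact h2.trans (le_abs_self _)
  have hhmem : X.Mem h :=
    (X.ideal h f hhm (Filter.Eventually.of_forall hhf) hf).1
  have hhJ : h ∈ J :=
    hJ.solid g h hg hhmem (Filter.Eventually.of_forall hhg)
  have hdiff : ∀ x, |f x - h x| ≤ |f x - g x| := by
    intro x
    have hfx1 : -(|f x|) ≤ f x := neg_abs_le _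
    have hfx2 : f x ≤ |f x| := le_abs_self _
    rcases le_total (g x) (-(|f x|)) with h1 | h1
    · have hx : h x = -(|f x|) := by
        have : min (g x) (|f x|) = g x := min_eq_left (h1.trans ((neg_abs_le (f x)).trans (le_abs_self _)))
        rw [hh]; simp only [this]; exact max_eq_left h1
      rw [hx, abs_of_nonneg (show (0:ℝ) ≤ f x - -(|f x|) by linarith),
        abs_of_nonneg (show (0:ℝ) ≤ f x - g x by linarith)]
      linarith
    · rcases le_total (g x) (|f x|) with h2 | h2
      · have hx : h x = g x := by
          rw [hh]; simp only [min_eq_left h2]; exact max_eq_right h1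
        rw [hx]
      · have hx : h x = |f x| := by
          rw [hh]; simp only [min_eq_right h2]
          exact max_eq_right ((neg_abs_le _).trans (le_abs_self _))
        rw [hx, abs_of_nonpos (show f x - |f x| ≤ (0:ℝ) by linarith),
          abs_of_nonpos (show f x - g x ≤ (0:ℝ) by linarith)]
        linarith
  have hmemfg : X.Mem (f - g) := by
    have := X.mem_add f ((-1 : ℝ) • g) hf (X.mem_smul (-1) g hgmem)
    simpa [sub_eq_add_neg, neg_one_smul] using this
  have hNle : X.N (f - h) ≤ X.N (f - g) := by
    refine (X.ideal (f - h) (f - g) (hfm.sub hhm)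
      (Filter.Eventually.of_forall fun x => ?_) hmemfg).2
    simpa using hdiff x
  calc sInf S2 ≤ X.N (f - h) :=
        csInf_le hbdd2 ⟨h, ⟨hhJ, Filter.Eventually.of_forall hhf⟩, rfl⟩
    _ ≤ X.N (f - g) := hNle
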